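/- Let M be a free 𝒯-module over a monoid 𝒯 with base ℬ, and let G be a subgroup of 𝒯 such that ℬ is G-invariant (as a set of G-orbit representatives, i.e., the G-orbits of base elements are distinct). Then the residue hypermodule M/G is free over 𝒯/G with base {bG : b ∈ ℬ}: every element of M/G is uniquely a sum ∑ (aᵢG)(bᵢG) with aᵢG ∈ (𝒯/G) ∪ {0}. -/

import Mathlib

open Classical in
/-- Action of a coefficient in `T ∪ {𝟘}` (modelled as `WithZero T`) on a module `N`
with zero, via the `T`-action `σ`. -/
noncomputable def wact {T N : Type} [Zero N] (σ : T → N → N) (a : WithZero T) (v : N) : N :=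
  if h : a = 0 then 0 else σ (WithZero.unzero h) v

/-- Let `M` be a free `T`-module over a monoid `T` with base `b : I → M`
(every element of `M` is uniquely `∑ aᵢ bᵢ` with coefficients `aᵢ ∈ T ∪ {𝟘}`), and let
`G ≤ T` be a subgroup whose orbits on the base elements are distinct.  Then the residue
hypermodule `M/G` is free over `T/G` with base `{bᵢG}`: every `G`-orbit in `M` contains
a sum `∑ aᵢ bᵢ`, and the cosets `aᵢG` of the coefficients (hence the nonzero support)
are uniquely determined. -/
theorem residue_free {T M I : Type} [Monoid T] [AddCommMonoid M]
    (σ : T → M → M)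
    (hσ1 : ∀ v, σ 1 v = v)
    (hσm : ∀ a b v, σ a (σ b v) = σ (a * b) v)
    (hσd : ∀ a v w, σ a (v + w) = σ a v + σ a w)
    (hσ0 : ∀ a, σ a 0 = 0)
    (G : Submonoid T)
    (hG : ∀ g ∈ G, ∃ g' ∈ G, g * g' = 1 ∧ g' * g = 1)
    (b : I → M)
    (hfree : ∀ x : M, ∃! c : I →₀ WithZero T, x = c.sum fun i a => wact σ a (b i))
    (hbase : ∀ i j : I, (∃ g ∈ G, σ g (b i) = b j) → i = j) :
    ∀ x : M,
      (∃ c : I →₀ WithZero T, ∃ g ∈ G, σ g (c.sum fun i a => wact σ a (b i)) = x) ∧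
      (∀ c c' : I →₀ WithZero T,
        (∃ g ∈ G, σ g (c.sum fun i a => wact σ a (b i)) = x) →
        (∃ g ∈ G, σ g (c'.sum fun i a => wact σ a (b i)) = x) →
        c.support = c'.support ∧ ∀ i : I, ∃ g ∈ G, c' i = (g : T) * c i) := by
  -- a key computation: acting by `h` on a sum rescales all coefficients by `h`
  have hmulz : ∀ (h : T) (a : WithZero T), (h : WithZero T) * a = 0 ↔ a = 0 := by
    intro h a
    induction a using WithZero.recZeroCoe with
    | zero => simp
    | coe t =>
      simp only [← WithZero.coe_mul]
      exact ⟨fun hc => absurd hc WithZero.coe_ne_zero, fun hc =>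
        absurd hc WithZero.coe_ne_zero⟩
  have key : ∀ (h : T) (c : I →₀ WithZero T),
      σ h (c.sum fun i a => wact σ a (b i)) =
      (c.mapRange (fun a => (h : WithZero T) * a) (by simp)).sum
        fun i a => wact σ a (b i) := by
    intro h c
    have hw0 : ∀ i : I, wact σ (0 : WithZero T) (b i) = 0 := by
      intro i; simp [wact]
    rw [Finsupp.sum_mapRange_index (fun i => hw0 i)]
    let φ : M →+ M := { toFun := σ h, map_zero' := hσ0 h, map_add' := hσd h }
    have : σ h (c.sum fun i a => wact σ a (b i)) =
        φ (c.sum fun i a => wact σ a (b i)) := rfl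
    rw [this, map_finsuppSum]
    apply Finsupp.sum_congr
    intro i hi
    have hne : c i ≠ 0 := Finsupp.mem_support_iff.mp hi
    obtain ⟨t, ht⟩ := WithZero.ne_zero_iff_exists.mp hne
    have hne' : (h : WithZero T) * c i ≠ 0 := by
      exact fun hc => hne ((hmulz h (c i)).mp hc)
    show σ h (wact σ (c i) (b i)) = wact σ ((h : WithZero T) * c i) (b i)
    rw [wact, wact, dif_neg hne, dif_neg hne']
    rw [hσm]
    congr 1
    have : (h : WithZero T) * c i = ((h * WithZero.unzero hne : T) : WithZero T) := by
      rw [WithZero.coe_mul, WithZero.coe_unzero]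
    rw [← WithZero.coe_unzero hne'] at this
    exact WithZero.coe_inj.mp this.symm
  intro x
  constructor
  · obtain ⟨c, hc, -⟩ := hfree x
    exact ⟨c, 1, one_mem G, by rw [hσ1, hc]⟩
  · rintro c c' ⟨g, hg, hgx⟩ ⟨g', hg', hg'x⟩
    obtain ⟨g'', hg'', hgg1, hgg2⟩ := hG g' hg'
    set h : T := g'' * g with hh
    have hhG : h ∈ G := mul_mem hg'' hg
    -- c' represents the same element as (h • c)
    have hrep : (c'.sum fun i a => wact σ a (b i)) =
        σ h (c.sum fun i a => wact σ a (b i)) := by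
      have h1 : σ g'' x = c'.sum fun i a => wact σ a (b i) := by
        rw [← hg'x, hσm, hgg2, hσ1]
      have h2 : σ g'' x = σ h (c.sum fun i a => wact σ a (b i)) := by
        rw [← hgx, hσm]
      rw [← h1, h2]
    rw [key h c] at hrep
    set d : I →₀ WithZero T := c.mapRange (fun a => (h : WithZero T) * a) (by simp)
      with hd
    have hcd : c' = d := by
      obtain ⟨e, he, huniq⟩ := hfree (c'.sum fun i a => wact σ a (b i))
      have h1 := huniq c' rfl
      have h2 := huniq d hrep
      rw [h1, h2]
    have hdapp : ∀ i, d i = (h : WithZero T) * c i := by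
      intro i; rw [hd, Finsupp.mapRange_apply]
    constructor
    · ext i
      simp only [Finsupp.mem_support_iff, hcd, hdapp i]
      exact (not_congr (hmulz h (c i))).symm
    · intro i
      exact ⟨h, hhG, by rw [hcd, hdapp i]⟩
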